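/- Let (R'',M'') be the sum of the two 4-player ranking problems: (R,M) where X_1–X_2, X_1–X_4, X_2–X_3, X_3–X_4 are drawn single matches, and (R',M') where X_3 beat X_1 and X_2, and X_4 drew with X_1 and X_2. If a scoring method f is self-consistent and satisfies f_3(R'',M'') > f_4(R'',M''), then f_2(R'',M'') > f_1(R'',M''). -/

import Mathlib

open Finset

/-- A ranking problem: skew-symmetric results matrix `R`, symmetric
nonnegative-integer matches matrix `M`, with `|R i j| ≤ M i j`. -/
structure RP (n : ℕ) where
  R : Fin n → Fin n → ℝ
  M : Fin n → Fin n → ℕ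
  skew : ∀ i j, R j i = - R i j
  symm : ∀ i j, M j i = M i j
  bound : ∀ i j, |R i j| ≤ (M i j : ℝ)

/-- Sum of two ranking problems. -/
def RP.add {n : ℕ} (P Q : RP n) : RP n where
  R i j := P.R i j + Q.R i j
  M i j := P.M i j + Q.M i j
  skew i j := by rw [P.skew i j, Q.skew i j]; ring
  symm i j := by rw [P.symm i j, Q.symm i j]
  bound i j := by
    calc |P.R i j + Q.R i j| ≤ |P.R i j| + |Q.R i j| := abs_add_le _ _
      _ ≤ (P.M i j : ℝ) + (Q.M i j : ℝ) := add_le_add (P.bound i j) (Q.bound i j)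
      _ = ((P.M i j + Q.M i j : ℕ) : ℝ) := by push_cast; ring

/-- The ranking problem with all results reversed. -/
def RP.neg {n : ℕ} (P : RP n) : RP n where
  R i j := - P.R i j
  M := P.M
  skew i j := by rw [P.skew i j]
  symm := P.symm
  bound i j := by simpa using P.bound i j

/-- Relabelling the players by a permutation. -/
def RP.relabel {n : ℕ} (σ : Equiv.Perm (Fin n)) (P : RP n) : RP n where
  R i j := P.R (σ.symm i) (σ.symm j)
  M i j := P.M (σ.symm i) (σ.symm j)
  skew i j := P.skew _ _
  symm i j := P.symm _ _
  bound i j := P.bound _ _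

/-- All players have played `m` matches. -/
def RPBalanced {n : ℕ} (P : RP n) (m : ℕ) : Prop := ∀ i, ∑ j, P.M i j = m

/-- Symmetry (SYM): if all results are draws, all scores are equal. -/
def SYM {n : ℕ} (f : RP n → Fin n → ℝ) : Prop :=
  ∀ P : RP n, (∀ i j, P.R i j = 0) → ∀ i j, f P i = f P j

/-- Inversion (INV). -/
def INV {n : ℕ} (f : RP n → Fin n → ℝ) : Prop :=
  ∀ P : RP n, ∀ i j, f P i ≥ f P j ↔ f P.neg i ≤ f P.neg j

/-- Order preservation (OP). -/
def OP {n : ℕ} (f : RP n → Fin n → ℝ) : Prop :=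
  ∀ P Q : RP n, ∀ m m' : ℕ, RPBalanced P m → RPBalanced Q m' →
    ∀ i j, f P i ≥ f P j → f Q i ≥ f Q j →
      f (P.add Q) i ≥ f (P.add Q) j ∧
      ((f P i > f P j ∨ f Q i > f Q j) → f (P.add Q) i > f (P.add Q) j)

/-- Strong order preservation (SOP). -/
def SOP {n : ℕ} (f : RP n → Fin n → ℝ) : Prop :=
  ∀ P Q : RP n, ∀ i j, f P i ≥ f P j → f Q i ≥ f Q j →
      f (P.add Q) i ≥ f (P.add Q) j ∧
      ((f P i > f P j ∨ f Q i > f Q j) → f (P.add Q) i > f (P.add Q) j)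

/-- Neutrality (NEU). -/
def NEU {n : ℕ} (f : RP n → Fin n → ℝ) : Prop :=
  ∀ σ : Equiv.Perm (Fin n), ∀ P : RP n, ∀ i, f P i = f (P.relabel σ) (σ i)

/-- Independence of irrelevant matches (IIM). -/
def IIM {n : ℕ} (f : RP n → Fin n → ℝ) : Prop :=
  ∀ P Q : RP n, ∀ i j k l : Fin n,
    i ≠ k → i ≠ l → j ≠ k → j ≠ l → i ≠ j → k ≠ l →
    (∀ a b, ¬((a = k ∧ b = l) ∨ (a = l ∧ b = k)) → P.R a b = Q.R a b ∧ P.M a b = Q.M a b) →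
    f P i ≥ f P j → f Q i ≥ f Q j

/-- A decomposition of a ranking problem into per-match results:
match `t` between `a` and `b` (for `t < M a b`) has result `res a b t ∈ [-1,1]`,
and the results sum to `R a b`. -/
structure RP.Decomp {n : ℕ} (P : RP n) where
  res : Fin n → Fin n → ℕ → ℝ
  skew : ∀ a b t, res b a t = - res a b t
  bound : ∀ a b t, t < P.M a b → |res a b t| ≤ 1
  sum : ∀ a b, ∑ t ∈ Finset.range (P.M a b), res a b t = P.R a b

/-- The opponent multiset of player `i`: `M i k` copies of each `k`. -/
def RP.Matches {n : ℕ} (P : RP n) (i : Fin n) := Σ k : Fin n, Fin (P.M i k)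

/-- Self-consistency (SC): if there is a bijection between the opponent
multisets of `i` and `j` matching each match of `i` to a match of `j` with a
weakly smaller per-match result against a weakly weaker opponent, then
`f i ≥ f j`, strictly if some comparison is strict. -/
def SC {n : ℕ} (f : RP n → Fin n → ℝ) : Prop :=
  ∀ P : RP n, ∀ d : P.Decomp, ∀ i j : Fin n, ∀ e : P.Matches i ≃ P.Matches j,
    (∀ m : P.Matches i,
      d.res i m.1 m.2.1 ≥ d.res j (e m).1 (e m).2.1 ∧ f P m.1 ≥ f P (e m).1) →
    f P i ≥ f P j ∧
    ((∃ m : P.Matches i,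
        d.res i m.1 m.2.1 > d.res j (e m).1 (e m).2.1 ∨ f P m.1 > f P (e m).1) →
      f P i > f P j)


/-- The sum of the drawn 4-cycle and the second-round tournament:
`r''₁₃ = r''₂₃ = -1`, all other aggregated results zero;
`m''₁₂ = m''₁₃ = m''₂₄ = m''₃₄ = 1`, `m''₁₄ = m''₂₃ = 2`. -/
def P12 : RP 4 where
  R := fun i j => ![![0,0,-1,0],![0,0,-1,0],![1,1,0,0],![0,0,0,0]] i j
  M := fun i j => ![![0,1,1,2],![1,0,2,1],![1,2,0,1],![2,1,1,0]] i j
  skew := by intro i j; fin_cases i <;> fin_cases j <;> norm_num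
  symm := by decide
  bound := by intro i j; fin_cases i <;> fin_cases j <;> norm_num


noncomputable def dres : Fin 4 → Fin 4 → ℕ → ℝ := fun a b t =>
  if a = 2 ∧ (b = 0 ∨ (b = 1 ∧ t = 0)) then 1
  else if b = 2 ∧ (a = 0 ∨ (a = 1 ∧ t = 0)) then -1
  else 0

noncomputable def d12 : P12.Decomp where
  res := dres
  skew := by
    intro a b t
    fin_cases a <;> fin_cases b <;> simp [dres] <;> split_ifs <;> norm_num
  bound := by
    intro a b t _
    fin_cases a <;> fin_cases b <;> simp [dres] <;> split_ifs <;> norm_num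
  sum := by
    intro a b
    fin_cases a <;> fin_cases b <;>
      norm_num [P12, dres, Finset.sum_range_succ, Fin.ext_iff]

def eto : P12.Matches 1 → P12.Matches 0 := fun m =>
  match m with
  | ⟨0, _⟩ => ⟨1, ⟨0, by decide⟩⟩
  | ⟨2, ⟨0, _⟩⟩ => ⟨2, ⟨0, by decide⟩⟩
  | ⟨2, ⟨_+1, _⟩⟩ => ⟨3, ⟨0, by decide⟩⟩
  | ⟨3, _⟩ => ⟨3, ⟨1, by decide⟩⟩

def einv : P12.Matches 0 → P12.Matches 1 := fun m =>
  match m with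
  | ⟨1, _⟩ => ⟨0, ⟨0, by decide⟩⟩
  | ⟨2, _⟩ => ⟨2, ⟨0, by decide⟩⟩
  | ⟨3, ⟨0, _⟩⟩ => ⟨2, ⟨1, by decide⟩⟩
  | ⟨3, ⟨_+1, _⟩⟩ => ⟨3, ⟨0, by decide⟩⟩

instance (i : Fin 4) : Fintype (P12.Matches i) := by unfold RP.Matches; infer_instance
instance (i : Fin 4) : DecidableEq (P12.Matches i) := by unfold RP.Matches; infer_instance

def e12 : P12.Matches 1 ≃ P12.Matches 0 where
  toFun := eto
  invFun := einv
  left_inv := by show ∀ m, einv (eto m) = m; decide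
  right_inv := by show ∀ m, eto (einv m) = m; decide

theorem sc_on_sum (f : RP 4 → Fin 4 → ℝ) (hSC : SC f)
    (h34 : f P12 2 > f P12 3) : f P12 1 > f P12 0 := by
  by_cases h01 : f P12 1 > f P12 0
  · exact h01
  push_neg at h01
  refine (hSC P12 d12 1 0 e12 ?_).2 ⟨⟨2, ⟨1, by decide⟩⟩, Or.inr h34⟩
  rintro ⟨k, t⟩
  fin_cases k <;> fin_cases t <;>
    simp [d12, dres, e12, eto] <;>
    first
      | exact h01
      | exact h34.le
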